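/- Let p ∈ (0,1) and q = 1-p. Then lim_{n→∞} (1/n)·[−Σ_{k=0}^{n-1} 2·C(n,k)·(p^k q^{n-k}/2)·log₂(p^k q^{n-k}/2) − p^n log₂ p^n] = −p log₂ p − q log₂ q, i.e. the Shannon entropy of the spectrum {p^k q^{n-k}/2 with multiplicity 2·C(n,k) for 0 ≤ k ≤ n-1, together with the single value p^n}, divided by n, converges to the binary entropy h(p). -/

import Mathlib

open Real Filter Finset

private lemma aux_sum (x y : ℝ) (n : ℕ) :
    ∑ k ∈ Finset.range (n+1), (n.choose k : ℝ) * (x^k * y^(n-k)) = (x+y)^n := by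
  rw [add_pow]
  refine Finset.sum_congr rfl fun k _ => by ring

private lemma aux_mean (x y : ℝ) (n : ℕ) :
    ∑ k ∈ Finset.range (n+1), (k:ℝ) * (n.choose k) * (x^k * y^(n-k))
      = n * x * (x+y)^(n-1) := by
  cases n with
  | zero => simp
  | succ m =>
    rw [Finset.sum_range_succ']
    have h : ∀ i : ℕ, ((i:ℝ)+1) * ((m+1).choose (i+1)) = (m+1) * (m.choose i) := by
      intro i
      have := Nat.add_one_mul_choose_eq m i
      have : ((m.succ * m.choose i : ℕ) : ℝ) = ((m.succ.choose i.succ * i.succ : ℕ) : ℝ) := by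
        rw [this]
      push_cast at this
      linarith
    have : ∑ i ∈ Finset.range (m+1),
        ((i:ℝ)+1) * ((m+1).choose (i+1)) * (x^(i+1) * y^(m+1-(i+1)))
        = ((m:ℝ)+1) * x * ∑ i ∈ Finset.range (m+1), (m.choose i : ℝ) * (x^i * y^(m-i)) := by
      rw [Finset.mul_sum]
      refine Finset.sum_congr rfl fun i _ => ?_
      rw [h i]
      have : m + 1 - (i+1) = m - i := by omega
      rw [this]
      ring
    push_cast
    push_cast at this
    rw [this, aux_sum]
    simp

private lemma key (p q : ℝ) (hp0 : 0 < p) (hp1 : p < 1) (hq : q = 1 - p) (n : ℕ) :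
    (-(∑ k ∈ Finset.range n,
          2 * (n.choose k : ℝ) * (p^k * q^(n-k) / 2) * Real.logb 2 (p^k * q^(n-k) / 2))
        - p^n * Real.logb 2 (p^n))
      = n * (-(p * Real.logb 2 p) - q * Real.logb 2 q) + (1 - p^n) := by
  have hq0 : 0 < q := by rw [hq]; linarith
  have hpq : p + q = 1 := by rw [hq]; ring
  have ht : ∀ k, 0 < p^k * q^(n-k) := fun k => mul_pos (pow_pos hp0 _) (pow_pos hq0 _)
  -- rewrite each summand
  have hstep : ∀ k, 2 * (n.choose k : ℝ) * (p^k * q^(n-k) / 2) * Real.logb 2 (p^k * q^(n-k) / 2)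
      = (n.choose k : ℝ) * (p^k * q^(n-k)) * Real.logb 2 (p^k * q^(n-k))
        - (n.choose k : ℝ) * (p^k * q^(n-k)) := by
    intro k
    rw [Real.logb_div (ne_of_gt (ht k)) two_ne_zero, Real.logb_self_eq_one one_lt_two]
    ring
  have hsplit : ∑ k ∈ Finset.range n,
      2 * (n.choose k : ℝ) * (p^k * q^(n-k) / 2) * Real.logb 2 (p^k * q^(n-k) / 2)
      = (∑ k ∈ Finset.range n,
          (n.choose k : ℝ) * (p^k * q^(n-k)) * Real.logb 2 (p^k * q^(n-k)))
        - ∑ k ∈ Finset.range n, (n.choose k : ℝ) * (p^k * q^(n-k)) := by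
    rw [← Finset.sum_sub_distrib]
    exact Finset.sum_congr rfl fun k _ => hstep k
  -- sum of probabilities over range n
  have hS0 : ∑ k ∈ Finset.range n, (n.choose k : ℝ) * (p^k * q^(n-k)) = 1 - p^n := by
    have h := aux_sum p q n
    rw [Finset.sum_range_succ] at h
    simp [hpq] at h
    linarith
  -- full entropy sum
  have hfull : ∑ k ∈ Finset.range (n+1),
      (n.choose k : ℝ) * (p^k * q^(n-k)) * Real.logb 2 (p^k * q^(n-k))
      = n * p * Real.logb 2 p + n * q * Real.logb 2 q := by
    have hlogt : ∀ k ∈ Finset.range (n+1),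
        (n.choose k : ℝ) * (p^k * q^(n-k)) * Real.logb 2 (p^k * q^(n-k))
        = Real.logb 2 p * ((k:ℝ) * (n.choose k) * (p^k * q^(n-k)))
          + Real.logb 2 q * ((n:ℝ) * ((n.choose k : ℝ) * (p^k * q^(n-k))))
          - Real.logb 2 q * ((k:ℝ) * (n.choose k) * (p^k * q^(n-k))) := by
      intro k hk
      rw [Finset.mem_range] at hk
      have hkn : k ≤ n := by omega
      rw [Real.logb_mul (by positivity) (by positivity), Real.logb_pow, Real.logb_pow,
        Nat.cast_sub hkn]
      ring
    rw [Finset.sum_congr rfl hlogt]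
    simp only [Finset.sum_sub_distrib, Finset.sum_add_distrib, ← Finset.mul_sum]
    have h1 := aux_mean p q n
    have h2 := aux_sum p q n
    rw [h1, h2, hpq, one_pow, mul_one, hq]
    ring
  -- extract last term of the full sum
  have hlast : ∑ k ∈ Finset.range (n+1),
      (n.choose k : ℝ) * (p^k * q^(n-k)) * Real.logb 2 (p^k * q^(n-k))
      = (∑ k ∈ Finset.range n,
          (n.choose k : ℝ) * (p^k * q^(n-k)) * Real.logb 2 (p^k * q^(n-k)))
        + p^n * Real.logb 2 (p^n) := by
    rw [Finset.sum_range_succ]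
    simp
  rw [hsplit, hS0]
  have : ∑ k ∈ Finset.range n,
      (n.choose k : ℝ) * (p^k * q^(n-k)) * Real.logb 2 (p^k * q^(n-k))
      = n * p * Real.logb 2 p + n * q * Real.logb 2 q - p^n * Real.logb 2 (p^n) := by
    rw [← hfull, hlast]; ring
  rw [this]
  ring

theorem entropy_rate_binomial_spectrum (p q : ℝ) (hp : p ∈ Set.Ioo (0:ℝ) 1) (hq : q = 1 - p) :
    Tendsto (fun n : ℕ =>
      (-(∑ k ∈ Finset.range n,
          2 * (n.choose k : ℝ) * (p^k * q^(n-k) / 2) * Real.logb 2 (p^k * q^(n-k) / 2))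
        - p^n * Real.logb 2 (p^n)) / n)
      atTop (nhds (-(p * Real.logb 2 p) - q * Real.logb 2 q)) := by
  obtain ⟨hp0, hp1⟩ := hp
  set H : ℝ := -(p * Real.logb 2 p) - q * Real.logb 2 q with hH
  have heq : ∀ n : ℕ, (-(∑ k ∈ Finset.range n,
          2 * (n.choose k : ℝ) * (p^k * q^(n-k) / 2) * Real.logb 2 (p^k * q^(n-k) / 2))
        - p^n * Real.logb 2 (p^n)) / n = (n * H + (1 - p^n)) / n := by
    intro n
    rw [key p q hp0 hp1 hq n]
  have hlim : Tendsto (fun n : ℕ => H + (1 - p^n) * ((n:ℝ))⁻¹) atTop (nhds H) := by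
    have h1 : Tendsto (fun n : ℕ => (1 - p^n : ℝ)) atTop (nhds 1) := by
      have := tendsto_pow_atTop_nhds_zero_of_lt_one (le_of_lt hp0) hp1
      have := (tendsto_const_nhds (x := (1:ℝ)) (f := atTop)).sub this
      simpa using this
    have h2 : Tendsto (fun n : ℕ => ((n:ℝ))⁻¹) atTop (nhds 0) :=
      tendsto_inv_atTop_zero.comp tendsto_natCast_atTop_atTop
    have := (tendsto_const_nhds (x := H) (f := (atTop : Filter ℕ))).add ((h1.mul h2))
    simpa using this
  refine hlim.congr' ?_
  filter_upwards [eventually_ge_atTop 1] with n hn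
  have hn0 : (n:ℝ) ≠ 0 := by positivity
  rw [heq n]
  field_simp
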